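/- Let A be an effect on a complex Hilbert space H and B ∈ B(H). If B does not commute with A, then there exist positive integers m and integers k, j with |k - j| ≥ 2 such that P^A((k/m, (k+1)/m]) · B · P^A((j/m, (j+1)/m]) ≠ 0. -/

import Mathlib

open scoped InnerProductSpace
open ContinuousLinearMap RCLike


/-- A projection-valued (spectral) measure for the operator `A`. -/
structure IsSpectralMeasure {H : Type*} [NormedAddCommGroup H] [InnerProductSpace ℂ H]
    [CompleteSpace H] (A : H →L[ℂ] H) (P : Set ℝ → H →L[ℂ] H) : Prop where
  isIdem : ∀ s, IsIdempotentElem (P s)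
  selfAdj : ∀ s, IsSelfAdjoint (P s)
  empty : P ∅ = 0
  univ : P Set.univ = 1
  inter : ∀ s t, P (s ∩ t) = P s * P t
  hasSum : ∀ (s : ℕ → Set ℝ), Pairwise (Function.onFun Disjoint s) →
    ∀ x, HasSum (fun n => P (s n) x) (P (⋃ n, s n) x)
  commutes : ∀ s, A * P s = P s * A
  smul_le : ∀ a b : ℝ, (a : ℂ) • P (Set.Ioc a b) ≤ P (Set.Ioc a b) * A * P (Set.Ioc a b)
  le_smul : ∀ a b : ℝ, P (Set.Ioc a b) * A * P (Set.Ioc a b) ≤ (b : ℂ) • P (Set.Ioc a b)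

section Aux

variable {H : Type*} [NormedAddCommGroup H] [InnerProductSpace ℂ H] [CompleteSpace H]

lemma inner_le_of_le' {S T : H →L[ℂ] H} (h : S ≤ T) (x : H) :
    re ⟪S x, x⟫_ℂ ≤ re ⟪T x, x⟫_ℂ := by
  have h2 := h.2 x
  simp only [ContinuousLinearMap.reApplyInnerSelf, sub_apply, inner_sub_left, map_sub,
    sub_nonneg] at h2
  exact h2

lemma smul_nonneg_aux (r : ℝ) (hr : 0 ≤ r) {T : H →L[ℂ] H} (hT : 0 ≤ T) :
    (0 : H →L[ℂ] H) ≤ (r : ℂ) • T := by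
  have hT' := (ContinuousLinearMap.nonneg_iff_isPositive T).mp hT
  have hsa : IsSelfAdjoint ((r : ℂ)) := Complex.conj_ofReal r
  refine (ContinuousLinearMap.nonneg_iff_isPositive _).mpr ⟨isSelfAdjoint_iff_isSymmetric.mp (hsa.smul (isSelfAdjoint_iff_isSymmetric.mpr hT'.1)), fun x => ?_⟩
  have h2 := hT'.2 x
  simp only [ContinuousLinearMap.reApplyInnerSelf, smul_apply, inner_smul_left,
    RCLike.re_to_complex, Complex.conj_ofReal, Complex.re_ofReal_mul] at *
  exact mul_nonneg hr h2

/-- Pythagoras for finite pairwise-orthogonal families. -/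
lemma pyth_aux {ι : Type*} (s : Finset ι) (v : ι → H)
    (h : ∀ i ∈ s, ∀ j ∈ s, i ≠ j → ⟪v i, v j⟫_ℂ = 0) :
    ‖∑ i ∈ s, v i‖ ^ 2 = ∑ i ∈ s, ‖v i‖ ^ 2 := by
  have key : ⟪∑ i ∈ s, v i, ∑ i ∈ s, v i⟫_ℂ = ∑ i ∈ s, (‖v i‖ : ℂ) ^ 2 := by
    rw [sum_inner]
    refine Finset.sum_congr rfl fun i hi => ?_
    rw [inner_sum, Finset.sum_eq_single i (fun j hj hne => h i hi j hj (Ne.symm hne))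
      (fun hi' => absurd hi hi')]
    exact inner_self_eq_norm_sq_to_K (v i)
  calc ‖∑ i ∈ s, v i‖ ^ 2 = re ⟪∑ i ∈ s, v i, ∑ i ∈ s, v i⟫_ℂ :=
        (inner_self_eq_norm_sq _).symm
    _ = re (∑ i ∈ s, ((‖v i‖ : ℂ)) ^ 2) := by rw [key]
    _ = ∑ i ∈ s, ‖v i‖ ^ 2 := by
        rw [map_sum]
        exact Finset.sum_congr rfl fun i _ => by
          rw [← Complex.ofReal_pow]; exact RCLike.ofReal_re _

variable {A : H →L[ℂ] H} {P : Set ℝ → H →L[ℂ] H}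

lemma IsSpectralMeasure.symmP (hP : IsSpectralMeasure A P) (s : Set ℝ) (x y : H) :
    ⟪P s x, y⟫_ℂ = ⟪x, P s y⟫_ℂ :=
  (isSelfAdjoint_iff_isSymmetric.mp (hP.selfAdj s)) x y

lemma IsSpectralMeasure.re_inner_self (hP : IsSpectralMeasure A P) (s : Set ℝ) (x : H) :
    re ⟪P s x, x⟫_ℂ = ‖P s x‖ ^ 2 := by
  have h1 : P s (P s x) = P s x := by
    rw [← ContinuousLinearMap.mul_apply, (hP.isIdem s).eq]
  calc re ⟪P s x, x⟫_ℂ = re ⟪P s (P s x), x⟫_ℂ := by rw [h1]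
    _ = re ⟪P s x, P s x⟫_ℂ := by rw [hP.symmP]
    _ = ‖P s x‖ ^ 2 := inner_self_eq_norm_sq _

lemma IsSpectralMeasure.norm_apply_le (hP : IsSpectralMeasure A P) (s : Set ℝ) (x : H) :
    ‖P s x‖ ≤ ‖x‖ := by
  have h1 : ‖P s x‖ ^ 2 ≤ ‖P s x‖ * ‖x‖ := by
    rw [← hP.re_inner_self s x]
    exact (RCLike.re_le_norm _).trans (norm_inner_le_norm _ _)
  nlinarith [norm_nonneg (P s x), norm_nonneg x]

lemma IsSpectralMeasure.le_one (hP : IsSpectralMeasure A P) (s : Set ℝ) : P s ≤ 1 := by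
  rw [le_def]
  constructor
  · exact isSelfAdjoint_iff_isSymmetric.mp ((IsSelfAdjoint.one _).sub (hP.selfAdj s))
  · intro x
    have h1 := hP.norm_apply_le s x
    have h2 := hP.re_inner_self s x
    simp only [ContinuousLinearMap.reApplyInnerSelf, sub_apply, ContinuousLinearMap.one_apply, inner_sub_left]
    rw [map_sub, h2, inner_self_eq_norm_sq]
    nlinarith [norm_nonneg (P s x), norm_nonneg x]

/-- Extraction of the two-sided compression bounds at the level of vectors. -/
lemma IsSpectralMeasure.band_bounds (hP : IsSpectralMeasure A P) (a b : ℝ) (x : H) :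
    a * ‖P (Set.Ioc a b) x‖ ^ 2 ≤ re ⟪A (P (Set.Ioc a b) x), P (Set.Ioc a b) x⟫_ℂ ∧
      re ⟪A (P (Set.Ioc a b) x), P (Set.Ioc a b) x⟫_ℂ ≤ b * ‖P (Set.Ioc a b) x‖ ^ 2 := by
  have h1 := inner_le_of_le' (hP.smul_le a b) x
  have h2 := inner_le_of_le' (hP.le_smul a b) x
  have e1 : ∀ c : ℝ, re ⟪((c : ℂ) • P (Set.Ioc a b)) x, x⟫_ℂ
      = c * ‖P (Set.Ioc a b) x‖ ^ 2 := by
    intro c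
    rw [smul_apply, inner_smul_left, Complex.conj_ofReal, RCLike.re_to_complex,
      Complex.re_ofReal_mul, ← RCLike.re_to_complex, hP.re_inner_self]
  have e2 : re ⟪(P (Set.Ioc a b) * A * P (Set.Ioc a b)) x, x⟫_ℂ
      = re ⟪A (P (Set.Ioc a b) x), P (Set.Ioc a b) x⟫_ℂ := by
    rw [ContinuousLinearMap.mul_apply, ContinuousLinearMap.mul_apply, hP.symmP]
  rw [e1, e2] at h1 h2
  exact ⟨h1, h2⟩

end Aux

section Main

variable {H : Type*} [NormedAddCommGroup H] [InnerProductSpace ℂ H] [CompleteSpace H]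
variable {A : H →L[ℂ] H} {P : Set ℝ → H →L[ℂ] H}

lemma IsSpectralMeasure.band_zero_low (hP : IsSpectralMeasure A P) (hA : 0 ≤ A)
    {m : ℕ} (hm : 0 < m) {k : ℤ} (hk : k ≤ -2) :
    P (Set.Ioc ((k : ℝ) / m) (((k : ℝ) + 1) / m)) = 0 := by
  ext x
  set q := P (Set.Ioc ((k : ℝ) / m) (((k : ℝ) + 1) / m)) with hq
  have hb := (hP.band_bounds ((k : ℝ) / m) (((k : ℝ) + 1) / m) x).2
  have hpos := inner_le_of_le' hA (q x)
  simp only [zero_apply, inner_zero_left, map_zero] at hpos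
  have hmr : (0 : ℝ) < (m : ℝ) := by exact_mod_cast hm
  have hneg : ((k : ℝ) + 1) / m < 0 := by
    apply div_neg_of_neg_of_pos ?_ hmr
    have : (k : ℝ) ≤ -2 := by exact_mod_cast hk
    linarith
  have hs0 : ‖q x‖ ^ 2 ≤ 0 := by nlinarith [sq_nonneg ‖q x‖]
  have hn : ‖q x‖ = 0 := by
    have := (pow_eq_zero_iff (n := 2) (by norm_num)).mp (le_antisymm hs0 (sq_nonneg _))
    exact this
  simpa using norm_eq_zero.mp hn

lemma IsSpectralMeasure.band_zero_high (hP : IsSpectralMeasure A P) (hA' : A ≤ 1)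
    {m : ℕ} (hm : 0 < m) {k : ℤ} (hk : (m : ℤ) + 1 ≤ k) :
    P (Set.Ioc ((k : ℝ) / m) (((k : ℝ) + 1) / m)) = 0 := by
  ext x
  set q := P (Set.Ioc ((k : ℝ) / m) (((k : ℝ) + 1) / m)) with hq
  have hb := (hP.band_bounds ((k : ℝ) / m) (((k : ℝ) + 1) / m) x).1
  have hub := inner_le_of_le' hA' (q x)
  rw [ContinuousLinearMap.one_apply, inner_self_eq_norm_sq] at hub
  have hmr : (0 : ℝ) < (m : ℝ) := by exact_mod_cast hm
  have hgt : 1 < (k : ℝ) / m := by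
    rw [one_lt_div hmr]
    exact_mod_cast lt_of_lt_of_le (by omega : (m : ℤ) < (m : ℤ) + 1) hk
  have hs0 : ‖q x‖ ^ 2 ≤ 0 := by nlinarith [sq_nonneg ‖q x‖]
  have hn : ‖q x‖ = 0 := by
    exact (pow_eq_zero_iff (n := 2) (by norm_num)).mp (le_antisymm hs0 (sq_nonneg _))
  simpa using norm_eq_zero.mp hn

lemma IsSpectralMeasure.band_disjoint {m : ℕ} (hm : 0 < m) {k j : ℤ} (hkj : k ≠ j) :
    Set.Ioc ((k : ℝ) / m) (((k : ℝ) + 1) / m) ∩ Set.Ioc ((j : ℝ) / m) (((j : ℝ) + 1) / m)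
      = (∅ : Set ℝ) := by
  have hmr : (0 : ℝ) < (m : ℝ) := by exact_mod_cast hm
  ext t
  simp only [Set.mem_inter_iff, Set.mem_Ioc, Set.mem_empty_iff_false, iff_false, not_and,
    and_imp]
  intro h1 h2 h3 h4
  rw [div_lt_iff₀ hmr] at h1 h3
  rw [le_div_iff₀ hmr] at h2 h4
  have c1 : (k : ℝ) < (j : ℝ) + 1 := by nlinarith
  have c2 : (j : ℝ) < (k : ℝ) + 1 := by nlinarith
  have d1 : k < j + 1 := by exact_mod_cast c1
  have d2 : j < k + 1 := by exact_mod_cast c2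
  omega

lemma IsSpectralMeasure.band_mul_band (hP : IsSpectralMeasure A P) {m : ℕ} (hm : 0 < m)
    {k j : ℤ} (hkj : k ≠ j) :
    P (Set.Ioc ((k : ℝ) / m) (((k : ℝ) + 1) / m)) *
      P (Set.Ioc ((j : ℝ) / m) (((j : ℝ) + 1) / m)) = 0 := by
  rw [← hP.inter, IsSpectralMeasure.band_disjoint hm hkj, hP.empty]

lemma IsSpectralMeasure.band_orth (hP : IsSpectralMeasure A P) {m : ℕ} (hm : 0 < m)
    {k j : ℤ} (hkj : k ≠ j) (u v : H) :
    ⟪P (Set.Ioc ((k : ℝ) / m) (((k : ℝ) + 1) / m)) u,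
      P (Set.Ioc ((j : ℝ) / m) (((j : ℝ) + 1) / m)) v⟫_ℂ = 0 := by
  rw [hP.symmP, ← ContinuousLinearMap.mul_apply, hP.band_mul_band hm hkj]
  simp

end Main

section Res
variable {H : Type*} [NormedAddCommGroup H] [InnerProductSpace ℂ H] [CompleteSpace H]
variable {A : H →L[ℂ] H} {P : Set ℝ → H →L[ℂ] H}

lemma IsSpectralMeasure.resolution (hP : IsSpectralMeasure A P) (hA : 0 ≤ A) (hA' : A ≤ 1)
    {m : ℕ} (hm : 0 < m) (x : H) :
    ∑ k ∈ Finset.Icc (-2 : ℤ) ((m : ℤ) + 1),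
      P (Set.Ioc ((k : ℝ) / m) (((k : ℝ) + 1) / m)) x = x := by
  have hmr : (0 : ℝ) < (m : ℝ) := by exact_mod_cast hm
  set e : ℕ ≃ ℤ := (Denumerable.eqv ℤ).symm with he
  set s : ℕ → Set ℝ := fun n => Set.Ioc ((e n : ℝ) / m) (((e n : ℝ) + 1) / m) with hs
  have hdisj : Pairwise (Function.onFun Disjoint s) := by
    intro n n' hne
    have hne' : e n ≠ e n' := fun h => hne (e.injective h)
    exact Set.disjoint_iff_inter_eq_empty.mpr (IsSpectralMeasure.band_disjoint hm hne')
  have huniv : (⋃ n, s n) = Set.univ := by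
    rw [Set.eq_univ_iff_forall]
    intro t
    refine Set.mem_iUnion.mpr ⟨e.symm (⌈t * m⌉ - 1), ?_⟩
    simp only [hs, Equiv.apply_symm_apply, Set.mem_Ioc]
    constructor
    · rw [div_lt_iff₀ hmr]
      push_cast
      have := Int.ceil_lt_add_one (t * m)
      linarith
    · rw [le_div_iff₀ hmr]
      push_cast
      have := Int.le_ceil (t * m)
      linarith
  have hsum := hP.hasSum s hdisj x
  rw [huniv, hP.univ, ContinuousLinearMap.one_apply] at hsum
  set J : Finset ℕ :=
    (Finset.Icc (-2 : ℤ) ((m : ℤ) + 1)).map (Denumerable.eqv ℤ).toEmbedding with hJ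
  have hvanish : ∀ n ∉ J, P (s n) x = 0 := by
    intro n hn
    have hmem : e n ∉ Finset.Icc (-2 : ℤ) ((m : ℤ) + 1) := by
      intro hc
      exact hn (Finset.mem_map.mpr ⟨e n, hc, by simp [he]⟩)
    rw [Finset.mem_Icc, not_and_or, not_le, not_le] at hmem
    rcases hmem with h | h
    · have h0 : P (s n) = 0 := hP.band_zero_low hA hm (k := e n) (by omega)
      simp [h0]
    · have h0 : P (s n) = 0 := hP.band_zero_high hA' hm (k := e n) (by omega)
      simp [h0]
  have hfin := hasSum_sum_of_ne_finset_zero (L := SummationFilter.unconditional ℕ) hvanish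
  have heq := hsum.unique hfin
  rw [Finset.sum_map] at heq
  refine Eq.trans (Finset.sum_congr rfl fun k hk => ?_) heq.symm
  simp [hs, he]

end Res

section Rbd
variable {H : Type*} [NormedAddCommGroup H] [InnerProductSpace ℂ H] [CompleteSpace H]
variable {A : H →L[ℂ] H} {P : Set ℝ → H →L[ℂ] H}

lemma IsSpectralMeasure.A_mul_band (hP : IsSpectralMeasure A P) (s : Set ℝ) :
    A * P s = P s * A * P s := by
  rw [← hP.commutes s, mul_assoc, (hP.isIdem s).eq]

lemma IsSpectralMeasure.band_mul_A (hP : IsSpectralMeasure A P) (s : Set ℝ) :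
    P s * A = P s * A * P s := by
  rw [mul_assoc, hP.commutes s, ← mul_assoc, (hP.isIdem s).eq]

lemma IsSpectralMeasure.R_norm_le (hP : IsSpectralMeasure A P) {m : ℕ} (hm : 0 < m)
    (k : ℤ) :
    ‖P (Set.Ioc ((k : ℝ) / m) (((k : ℝ) + 1) / m)) * A *
        P (Set.Ioc ((k : ℝ) / m) (((k : ℝ) + 1) / m)) -
      (((k : ℝ) / m : ℝ) : ℂ) • P (Set.Ioc ((k : ℝ) / m) (((k : ℝ) + 1) / m))‖
      ≤ 1 / m := by
  have hmr : (0 : ℝ) < (m : ℝ) := by exact_mod_cast hm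
  set a : ℝ := (k : ℝ) / m with ha
  set b : ℝ := ((k : ℝ) + 1) / m with hb
  set q := P (Set.Ioc a b) with hq
  set R := q * A * q - (a : ℂ) • q with hR
  have hR0 : 0 ≤ R := sub_nonneg.mpr (hP.smul_le a b)
  have hRle : R ≤ (1 / m : ℝ) • (1 : H →L[ℂ] H) := by
    have h1 : R ≤ ((1 / m : ℝ) : ℂ) • q := by
      have h2 : R ≤ (b : ℂ) • q - (a : ℂ) • q := sub_le_sub_right (hP.le_smul a b) _
      have h3 : (b : ℂ) • q - (a : ℂ) • q = ((1 / m : ℝ) : ℂ) • q := by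
        rw [← sub_smul]
        congr 1
        rw [← Complex.ofReal_sub]
        congr 1
        rw [ha, hb]
        field_simp
        ring
      rwa [h3] at h2
    have h4 : ((1 / m : ℝ) : ℂ) • q ≤ ((1 / m : ℝ) : ℂ) • (1 : H →L[ℂ] H) := by
      have h5 := smul_nonneg_aux (1 / m) (by positivity)
        (sub_nonneg.mpr (hP.le_one (Set.Ioc a b)))
      rw [smul_sub] at h5
      exact sub_nonneg.mp h5
    have h6 : ((1 / m : ℝ) : ℂ) • (1 : H →L[ℂ] H) = (1 / m : ℝ) • (1 : H →L[ℂ] H) := by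
      rw [← algebraMap_smul ℂ (1 / m : ℝ) (1 : H →L[ℂ] H)]
      norm_num
    exact (h1.trans h4).trans_eq h6
  have := (CStarAlgebra.norm_le_iff_le_algebraMap R (r := 1 / m) (by positivity) hR0).mpr
    (by rwa [Algebra.algebraMap_eq_smul_one])
  exact this

end Rbd

section Near
variable {H : Type*} [NormedAddCommGroup H] [InnerProductSpace ℂ H] [CompleteSpace H]
variable {A : H →L[ℂ] H} {P : Set ℝ → H →L[ℂ] H}

lemma IsSpectralMeasure.near_bound (hP : IsSpectralMeasure A P) {m : ℕ} (hm : 0 < m)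
    (B : H →L[ℂ] H) (k j : ℤ) (hkj : (k - j).natAbs ≤ 1) (x : H) :
    ‖(P (Set.Ioc ((k : ℝ) / m) (((k : ℝ) + 1) / m)) * (B * A - A * B) *
        P (Set.Ioc ((j : ℝ) / m) (((j : ℝ) + 1) / m))) x‖
      ≤ 3 / m * ‖B‖ * ‖P (Set.Ioc ((j : ℝ) / m) (((j : ℝ) + 1) / m)) x‖ := by
  have hmr : (0 : ℝ) < (m : ℝ) := by exact_mod_cast hm
  set pk := P (Set.Ioc ((k : ℝ) / m) (((k : ℝ) + 1) / m)) with hpk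
  set pj := P (Set.Ioc ((j : ℝ) / m) (((j : ℝ) + 1) / m)) with hpj
  set Rk := pk * A * pk - (((k : ℝ) / m : ℝ) : ℂ) • pk with hRk
  set Rj := pj * A * pj - (((j : ℝ) / m : ℝ) : ℂ) • pj with hRj
  have hRkn : ‖Rk‖ ≤ 1 / m := hP.R_norm_le hm k
  have hRjn : ‖Rj‖ ≤ 1 / m := hP.R_norm_le hm j
  set y := pj x with hy'
  have hy : pj y = y := by rw [hy', ← ContinuousLinearMap.mul_apply, (hP.isIdem _).eq]
  set c : ℝ := (j : ℝ) / m - (k : ℝ) / m with hc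
  -- the key algebraic identity
  have hsplitj : pj * A * pj = Rj + (((j : ℝ) / m : ℝ) : ℂ) • pj := by
    rw [hRj, sub_add_cancel]
  have hsplitk : pk * A * pk = Rk + (((k : ℝ) / m : ℝ) : ℂ) • pk := by
    rw [hRk, sub_add_cancel]
  have hA1 : A y = Rj y + (((j : ℝ) / m : ℝ) : ℂ) • y := by
    conv_lhs => rw [← hy, ← ContinuousLinearMap.mul_apply, hP.A_mul_band, hsplitj]
    rw [ContinuousLinearMap.add_apply, ContinuousLinearMap.smul_apply, hy]
  have hA2 : ∀ z, pk (A z) = Rk z + (((k : ℝ) / m : ℝ) : ℂ) • pk z := by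
    intro z
    rw [← ContinuousLinearMap.mul_apply, hP.band_mul_A, hsplitk,
      ContinuousLinearMap.add_apply, ContinuousLinearMap.smul_apply]
  have hiden : (pk * (B * A - A * B) * pj) x
      = pk (B (Rj y)) + ((c : ℝ) : ℂ) • pk (B y) - Rk (B y) := by
    have e1 : (pk * (B * A - A * B) * pj) x = pk (B (A y)) - pk (A (B y)) := by
      simp only [ContinuousLinearMap.mul_apply, ContinuousLinearMap.sub_apply,
        ContinuousLinearMap.mul_apply, map_sub]
      rfl
    rw [e1, hA1, hA2 (B y)]
    rw [map_add, map_add, map_smul, map_smul]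
    rw [hc]
    push_cast
    module
  rw [hiden]
  have hb1 : ‖pk (B (Rj y))‖ ≤ 1 / m * (‖B‖ * ‖y‖) := by
    calc ‖pk (B (Rj y))‖ ≤ ‖B (Rj y)‖ := hP.norm_apply_le _ _
      _ ≤ ‖B‖ * ‖Rj y‖ := B.le_opNorm _
      _ ≤ ‖B‖ * (1 / m * ‖y‖) := by
          refine mul_le_mul_of_nonneg_left ?_ (norm_nonneg B)
          exact (Rj.le_opNorm y).trans (mul_le_mul_of_nonneg_right hRjn (norm_nonneg y))
      _ = 1 / m * (‖B‖ * ‖y‖) := by ring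
  have hcabs : |c| ≤ 1 / m := by
    have habs : |(j : ℝ) - (k : ℝ)| ≤ 1 := by
      have h7 : |j - k| ≤ (1 : ℤ) := by rw [abs_le]; omega
      rw [show (j : ℝ) - (k : ℝ) = ((j - k : ℤ) : ℝ) by push_cast; ring, ← Int.cast_abs]
      exact_mod_cast h7
    rw [hc, div_sub_div_same, abs_div, abs_of_pos hmr]
    gcongr
  have hb2 : ‖((c : ℝ) : ℂ)‖ * ‖pk (B y)‖ ≤ 1 / m * (‖B‖ * ‖y‖) := by
    have h8 : ‖((c : ℝ) : ℂ)‖ = |c| := Complex.norm_real c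
    have h9 : ‖pk (B y)‖ ≤ ‖B‖ * ‖y‖ := (hP.norm_apply_le _ _).trans (B.le_opNorm y)
    rw [h8]
    exact mul_le_mul hcabs h9 (norm_nonneg _) (by positivity)
  have hb3 : ‖Rk (B y)‖ ≤ 1 / m * (‖B‖ * ‖y‖) := by
    refine (Rk.le_opNorm _).trans ?_
    exact mul_le_mul hRkn (B.le_opNorm y) (norm_nonneg _) (by positivity)
  have hfin : ‖pk (B (Rj y)) + ((c : ℝ) : ℂ) • pk (B y) - Rk (B y)‖
      ≤ ‖pk (B (Rj y))‖ + ‖((c : ℝ) : ℂ)‖ * ‖pk (B y)‖ + ‖Rk (B y)‖ := by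
    refine (norm_sub_le _ _).trans ?_
    have := norm_add_le (pk (B (Rj y))) (((c : ℝ) : ℂ) • pk (B y))
    rw [norm_smul] at this
    linarith
  have hring : 3 / (m : ℝ) * ‖B‖ * ‖y‖ = 3 * (1 / m * (‖B‖ * ‖y‖)) := by ring
  rw [hy']  at hb1 hb2 hb3 hfin ⊢
  linarith

end Near


/-- Lemma 2.3: if `B` does not commute with the effect `A`, then there are `m, k, j`
with `|k - j| ≥ 2` such that `P^A((k/m,(k+1)/m]) B P^A((j/m,(j+1)/m]) ≠ 0`. -/
theorem exists_far_spectral_compression_ne_zero {H : Type*} [NormedAddCommGroup H]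
    [InnerProductSpace ℂ H] [CompleteSpace H]
    (A : H →L[ℂ] H) (hA : 0 ≤ A) (hA' : A ≤ 1)
    (P : Set ℝ → H →L[ℂ] H) (hP : IsSpectralMeasure A P)
    (B : H →L[ℂ] H) (hB : B * A ≠ A * B) :
    ∃ (m : ℕ), 0 < m ∧ ∃ k j : ℤ, 2 ≤ |k - j| ∧
      P (Set.Ioc ((k : ℝ) / m) (((k : ℝ) + 1) / m)) * B *
        P (Set.Ioc ((j : ℝ) / m) (((j : ℝ) + 1) / m)) ≠ 0 := by
  by_contra hcon
  push_neg at hcon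
  have hDop : B * A - A * B = 0 := by
    refine ContinuousLinearMap.ext fun x => ?_
    rw [ContinuousLinearMap.zero_apply]
    have key : ∀ m : ℕ, 0 < m → ‖(B * A - A * B) x‖ ≤ 9 / m * ‖B‖ * ‖x‖ := by
      intro m hm
      set D := B * A - A * B with hD
      set p : ℤ → H →L[ℂ] H :=
        fun k => P (Set.Ioc ((k : ℝ) / m) (((k : ℝ) + 1) / m)) with hp
      set I : Finset ℤ := Finset.Icc (-2 : ℤ) ((m : ℤ) + 1) with hI
      have hres : ∀ y : H, ∑ k ∈ I, p k y = y := by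
        intro y
        simp only [hp, hI]
        exact hP.resolution hA hA' hm y
      have hzero : ∀ k ∉ I, p k = 0 := by
        intro k hk
        rw [hI, Finset.mem_Icc] at hk
        simp only [hp]
        by_cases hk2 : k ≤ -2
        · exact hP.band_zero_low hA hm hk2
        · exact hP.band_zero_high hA' hm (by omega)
      have hfar : ∀ k j : ℤ, 2 ≤ |k - j| → p k * D * p j = 0 := by
        intro k j hkj
        simp only [hp, hD]
        have h0 := hcon m hm k j hkj
        set Pk := P (Set.Ioc ((k : ℝ) / m) (((k : ℝ) + 1) / m)) with hPk
        set Pj := P (Set.Ioc ((j : ℝ) / m) (((j : ℝ) + 1) / m)) with hPj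
        have e1 : Pk * (B * A) * Pj = 0 := by
          rw [mul_assoc, mul_assoc, hPj, hP.commutes, ← hPj, ← mul_assoc, ← mul_assoc, h0,
            zero_mul]
        have e2 : Pk * (A * B) * Pj = 0 := by
          rw [← mul_assoc, hPk, ← hP.commutes, ← hPk, mul_assoc A Pk B,
            mul_assoc A (Pk * B) Pj, h0, mul_zero]
        rw [mul_sub, sub_mul, e1, e2, sub_zero]
      have hDx : D x = ∑ d ∈ Finset.Icc (-1 : ℤ) 1, ∑ j ∈ I, (p (j + d) * D * p j) x := by
        calc D x = D (∑ j ∈ I, p j x) := by rw [hres x]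
          _ = ∑ j ∈ I, D (p j x) := map_sum D _ I
          _ = ∑ j ∈ I, ∑ k ∈ I, (p k * D * p j) x := by
              refine Finset.sum_congr rfl fun j hj => ?_
              conv_lhs => rw [← hres (D (p j x))]
              exact Finset.sum_congr rfl fun k hk => by
                simp [ContinuousLinearMap.mul_apply]
          _ = ∑ j ∈ I, ∑ d ∈ Finset.Icc (-1 : ℤ) 1, (p (j + d) * D * p j) x := by
              refine Finset.sum_congr rfl fun j hj => ?_
              have himg : (Finset.Icc (-1 : ℤ) 1).map (addLeftEmbedding j)
                  = Finset.Icc (j - 1) (j + 1) := by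
                rw [Finset.map_add_left_Icc]
                congr 1 <;> ring
              have h1 : ∑ k ∈ I, (p k * D * p j) x
                  = ∑ k ∈ I ∪ Finset.Icc (j - 1) (j + 1), (p k * D * p j) x := by
                refine Finset.sum_subset Finset.subset_union_left fun k hkU hkI => ?_
                rw [hzero k hkI]
                simp
              have h2 : ∑ k ∈ Finset.Icc (j - 1) (j + 1), (p k * D * p j) x
                  = ∑ k ∈ I ∪ Finset.Icc (j - 1) (j + 1), (p k * D * p j) x := by
                refine Finset.sum_subset Finset.subset_union_right fun k hkU hkIcc => ?_
                rw [Finset.mem_Icc] at hkIcc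
                have habs : 2 ≤ |k - j| := by rw [le_abs]; omega
                rw [hfar k j habs]
                simp
              calc ∑ k ∈ I, (p k * D * p j) x
                  = ∑ k ∈ Finset.Icc (j - 1) (j + 1), (p k * D * p j) x := h1.trans h2.symm
                _ = ∑ d ∈ Finset.Icc (-1 : ℤ) 1, (p (j + d) * D * p j) x := by
                    rw [← himg, Finset.sum_map]
                    simp only [addLeftEmbedding_apply]
          _ = ∑ d ∈ Finset.Icc (-1 : ℤ) 1, ∑ j ∈ I, (p (j + d) * D * p j) x :=
              Finset.sum_comm
      rw [hDx]
      have hw : ∀ d ∈ Finset.Icc (-1 : ℤ) 1,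
          ‖∑ j ∈ I, (p (j + d) * D * p j) x‖ ≤ 3 / m * ‖B‖ * ‖x‖ := by
        intro d hd
        rw [Finset.mem_Icc] at hd
        have hvap : ∀ j : ℤ, (p (j + d) * D * p j) x = p (j + d) (D (p j x)) := by
          intro j
          simp [ContinuousLinearMap.mul_apply]
        have horth : ∀ i ∈ I, ∀ j ∈ I, i ≠ j →
            ⟪(p (i + d) * D * p i) x, (p (j + d) * D * p j) x⟫_ℂ = 0 := by
          intro i _ j _ hne
          rw [hvap i, hvap j]
          simp only [hp]
          exact hP.band_orth hm (by omega) _ _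
        have hpyth1 := pyth_aux I (fun j => (p (j + d) * D * p j) x) horth
        have horth2 : ∀ i ∈ I, ∀ j ∈ I, i ≠ j → ⟪p i x, p j x⟫_ℂ = 0 := by
          intro i _ j _ hne
          simp only [hp]
          exact hP.band_orth hm hne _ _
        have hx2 : ∑ j ∈ I, ‖p j x‖ ^ 2 = ‖x‖ ^ 2 := by
          rw [← pyth_aux I (fun j => p j x) horth2, hres x]
        have hterm : ∀ j ∈ I, ‖(p (j + d) * D * p j) x‖ ^ 2
            ≤ (3 / m * ‖B‖) ^ 2 * ‖p j x‖ ^ 2 := by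
          intro j _
          have hnb : ‖(p (j + d) * D * p j) x‖ ≤ 3 / m * ‖B‖ * ‖p j x‖ := by
            simp only [hp, hD]
            exact hP.near_bound hm B (j + d) j (by omega) x
          calc ‖(p (j + d) * D * p j) x‖ ^ 2 ≤ (3 / m * ‖B‖ * ‖p j x‖) ^ 2 :=
                pow_le_pow_left₀ (norm_nonneg _) hnb 2
            _ = (3 / m * ‖B‖) ^ 2 * ‖p j x‖ ^ 2 := by ring
        have hsq : ‖∑ j ∈ I, (p (j + d) * D * p j) x‖ ^ 2
            ≤ (3 / m * ‖B‖) ^ 2 * ‖x‖ ^ 2 := by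
          rw [hpyth1, ← hx2, Finset.mul_sum]
          exact Finset.sum_le_sum hterm
        have hc0 : (0 : ℝ) ≤ 3 / m * ‖B‖ * ‖x‖ := by positivity
        nlinarith [norm_nonneg (∑ j ∈ I, (p (j + d) * D * p j) x),
          sq_nonneg (‖∑ j ∈ I, (p (j + d) * D * p j) x‖ + 3 / m * ‖B‖ * ‖x‖)]
      calc ‖∑ d ∈ Finset.Icc (-1 : ℤ) 1, ∑ j ∈ I, (p (j + d) * D * p j) x‖
          ≤ ∑ d ∈ Finset.Icc (-1 : ℤ) 1, ‖∑ j ∈ I, (p (j + d) * D * p j) x‖ :=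
            norm_sum_le _ _
        _ ≤ ∑ _d ∈ Finset.Icc (-1 : ℤ) 1, 3 / m * ‖B‖ * ‖x‖ := Finset.sum_le_sum hw
        _ = 3 * (3 / m * ‖B‖ * ‖x‖) := by
            rw [Finset.sum_const]
            have hcard : (Finset.Icc (-1 : ℤ) 1).card = 3 := by rw [Int.card_Icc]; rfl
            rw [hcard, nsmul_eq_mul]
            norm_num
        _ = 9 / m * ‖B‖ * ‖x‖ := by ring
    have hlim : Filter.Tendsto (fun m : ℕ => 9 / (m : ℝ) * ‖B‖ * ‖x‖)
        Filter.atTop (nhds 0) := by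
      have t1 := tendsto_const_div_atTop_nhds_zero_nat (9 : ℝ)
      have t2 := (t1.mul_const ‖B‖).mul_const ‖x‖
      simpa using t2
    have hle : ‖(B * A - A * B) x‖ ≤ 0 := by
      refine ge_of_tendsto hlim ?_
      filter_upwards [Filter.eventually_gt_atTop 0] with m hm
      exact key m hm
    exact norm_eq_zero.mp (le_antisymm hle (norm_nonneg _))
  exact hB (sub_eq_zero.mp hDop)
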